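/- Let d ≥ 1, let ρ > 0, L_g > 0, and γ > 0 satisfy γρ < 1 and γL_g ≤ 1/2. Let g : ℝ^d → ℝ be ρ-weakly convex and twice continuously differentiable, and suppose that the Hessian of g satisfies ‖∇²g(z)‖ ≤ L_g (in operator norm) for every z in the image Prox_{γg}(ℝ^d). Then the Moreau envelope g^γ is 2L_g-smooth on ℝ^d: its Hessian satisfies −2L_g‖v‖² ≤ ⟨∇²g^γ(x) v, v⟩ ≤ L_g‖v‖² for all x, v ∈ ℝ^d, and in particular ∇g^γ is Lipschitz continuous with constant 2L_g. -/

import Mathlib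

open scoped RealInnerProductSpace
open Asymptotics Filter

section helpers
variable {E : Type*} [NormedAddCommGroup E] [InnerProductSpace ℝ E] [CompleteSpace E]

lemma aux_littleO_of_sq_bound {f : E → ℝ} {z : E} (C : ℝ)
    (h : ∀ w, |f w| ≤ C * ‖w - z‖ ^ 2) : f =o[nhds z] fun w => w - z := by
  rw [Asymptotics.isLittleO_iff]
  intro ε hε
  have hC : (0:ℝ) < |C| + 1 := by positivity
  filter_upwards [Metric.ball_mem_nhds z (div_pos hε hC)] with w hw
  rw [Metric.mem_ball, dist_eq_norm] at hw
  have h1 : |f w| ≤ C * ‖w - z‖ ^ 2 := h w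
  have h2 : (0:ℝ) ≤ ‖w - z‖ := norm_nonneg _
  have h3 : ‖w - z‖ < ε / (|C| + 1) := hw
  have h5 : C ≤ |C| := le_abs_self C
  have h6 : ‖w - z‖ * (|C| + 1) < ε := by
    rwa [← lt_div_iff₀ hC]
  have : ‖f w‖ = |f w| := rfl
  rw [this]
  calc |f w| ≤ C * ‖w - z‖ ^ 2 := h1
    _ ≤ (|C| + 1) * (‖w - z‖ * ‖w - z‖) := by nlinarith
    _ ≤ ε * ‖w - z‖ := by nlinarith
    _ = ε * ‖(fun w => w - z) w‖ := rfl

lemma aux_grad_sq (C : ℝ) (x y₀ : E) :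
    HasGradientAt (fun y : E => C * ‖x - y‖ ^ 2) ((2 * C) • (y₀ - x)) y₀ := by
  rw [hasGradientAt_iff_isLittleO]
  have key : ∀ y : E, C * ‖x - y‖ ^ 2 - C * ‖x - y₀‖ ^ 2 - ⟪(2 * C) • (y₀ - x), y - y₀⟫ =
      C * ‖y - y₀‖ ^ 2 := by
    intro y
    have h : x - y = (x - y₀) + -(y - y₀) := by abel
    have h2 : y₀ - x = -(x - y₀) := by abel
    rw [h, norm_add_sq_real, real_inner_smul_left, norm_neg, inner_neg_right, h2,
      inner_neg_left]
    ring
  have : (fun y => C * ‖x - y‖ ^ 2 - C * ‖x - y₀‖ ^ 2 - ⟪(2 * C) • (y₀ - x), y - y₀⟫)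
      =o[nhds y₀] fun y => y - y₀ := by
    apply aux_littleO_of_sq_bound (|C|)
    intro w
    rw [key w, abs_mul, abs_pow, abs_norm]
  exact this


lemma aux_foc (γ : ℝ) (hγ : 0 < γ) (g : E → ℝ) (g' : E → E)
    (hg' : ∀ x, HasGradientAt g (g' x) x) (x p : E)
    (hmin : ∀ y, 1 / (2 * γ) * ‖x - p‖ ^ 2 + g p ≤ 1 / (2 * γ) * ‖x - y‖ ^ 2 + g y) :
    p + γ • g' p = x := by
  have hq := aux_grad_sq (1 / (2 * γ)) x p
  have hsum : HasGradientAt (fun y : E => 1 / (2 * γ) * ‖x - y‖ ^ 2 + g y)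
      ((2 * (1 / (2 * γ))) • (p - x) + g' p) p := by
    have hgp := hg' p
    rw [hasGradientAt_iff_hasFDerivAt] at hq hgp ⊢
    simpa using hq.fun_add hgp
  have hlm : IsLocalMin (fun y : E => 1 / (2 * γ) * ‖x - y‖ ^ 2 + g y) p :=
    Filter.Eventually.of_forall fun y => hmin y
  have h0 : (InnerProductSpace.toDual ℝ E) ((2 * (1 / (2 * γ))) • (p - x) + g' p) = 0 := by
    rw [hasGradientAt_iff_hasFDerivAt] at hsum
    exact hlm.hasFDerivAt_eq_zero hsum
  have h0' : (2 * (1 / (2 * γ))) • (p - x) + g' p = 0 := by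
    have := congrArg (InnerProductSpace.toDual ℝ E).symm h0
    simpa using this
  have hγne : γ ≠ 0 := hγ.ne'
  have h2 : (2 : ℝ) * (1 / (2 * γ)) = γ⁻¹ := by field_simp
  rw [h2] at h0'
  have := congrArg (fun v : E => γ • v) h0'
  simp only [smul_add, smul_smul, mul_inv_cancel₀ hγne, one_smul, smul_zero] at this
  have h3 : (p - x) + γ • g' p = 0 := this
  have : p + γ • g' p = (p - x) + γ • g' p + x := by abel
  rw [this, h3, zero_add]

lemma aux_mono (ρ : ℝ) (g : E → ℝ) (g' : E → E) (hg' : ∀ x, HasGradientAt g (g' x) x)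
    (hweak : ConvexOn ℝ Set.univ (fun x => g x + ρ / 2 * ‖x‖ ^ 2)) (u v : E) :
    -(ρ * ‖u - v‖ ^ 2) ≤ ⟪g' u - g' v, u - v⟫ := by
  set G₀ : E → ℝ := fun x => g x + ρ / 2 * ‖x‖ ^ 2 with hG₀def
  have hG₀ : ∀ y : E, HasGradientAt G₀ (g' y + ρ • y) y := by
    intro y
    have hsq : HasGradientAt (fun w : E => ρ / 2 * ‖(0 : E) - w‖ ^ 2)
        ((2 * (ρ / 2)) • (y - 0)) y := aux_grad_sq (ρ / 2) 0 y
    have hsq' : HasGradientAt (fun w : E => ρ / 2 * ‖w‖ ^ 2) (ρ • y) y := by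
      have heq : (fun w : E => ρ / 2 * ‖(0 : E) - w‖ ^ 2) = fun w : E => ρ / 2 * ‖w‖ ^ 2 := by
        funext w; rw [zero_sub, norm_neg]
      have heq2 : ((2 * (ρ / 2)) • (y - 0)) = ρ • y := by
        rw [sub_zero]; ring_nf
      rw [heq, heq2] at hsq; exact hsq
    have hgy := hg' y
    rw [hasGradientAt_iff_hasFDerivAt] at hsq' hgy ⊢
    simpa using hgy.fun_add hsq'
  set c : ℝ → E := fun t => v + t • (u - v) with hcdef
  have hc : ∀ t : ℝ, HasDerivAt c (u - v) t := by
    intro t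
    have h1 : HasDerivAt (fun t : ℝ => t • (u - v)) ((1 : ℝ) • (u - v)) t :=
      (hasDerivAt_id t).smul_const (u - v)
    rw [one_smul] at h1
    exact h1.const_add v
  set h : ℝ → ℝ := fun t => G₀ (c t) with hhdef
  have hh : ∀ t : ℝ, HasDerivAt h ⟪g' (c t) + ρ • (c t), u - v⟫ t := by
    intro t
    have hgrad := hG₀ (c t)
    rw [hasGradientAt_iff_hasFDerivAt] at hgrad
    have := hgrad.comp_hasDerivAt t (hc t)
    exact (by simpa [Function.comp, inner_add_left, real_inner_smul_left] using this :
      HasDerivAt (G₀ ∘ c) ⟪g' (c t) + ρ • (c t), u - v⟫ t)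
  have hconv : ConvexOn ℝ Set.univ h := by
    have := hweak.comp_affineMap (AffineMap.lineMap v u)
    have heq : (fun x => g x + ρ / 2 * ‖x‖ ^ 2) ∘ (AffineMap.lineMap v u : ℝ →ᵃ[ℝ] E) = h := by
      funext t
      simp only [Function.comp_apply, AffineMap.coe_lineMap, hhdef, hcdef, hG₀def,
        AffineMap.lineMap_apply_module', vsub_eq_sub, vadd_eq_add]
      rw [add_comm (t • (u - v)) v]
    rw [heq] at this
    have hpre : (AffineMap.lineMap v u : ℝ →ᵃ[ℝ] E) ⁻¹' Set.univ = Set.univ := by simp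
    rwa [hpre] at this
  have hmono := hconv.monotoneOn_deriv (fun t _ => (hh t).differentiableAt)
  have hle : deriv h 0 ≤ deriv h 1 :=
    hmono (Set.mem_univ (0:ℝ)) (Set.mem_univ (1:ℝ)) zero_le_one
  rw [(hh 0).deriv, (hh 1).deriv] at hle
  have hc0 : c 0 = v := by simp [hcdef]
  have hc1 : c 1 = u := by simp [hcdef]
  rw [hc0, hc1] at hle
  have hexp : ⟪g' u + ρ • u, u - v⟫ - ⟪g' v + ρ • v, u - v⟫
      = ⟪g' u - g' v, u - v⟫ + ρ * ⟪u - v, u - v⟫ := by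
    rw [← inner_sub_left]
    have : g' u + ρ • u - (g' v + ρ • v) = (g' u - g' v) + ρ • (u - v) := by
      rw [smul_sub]; abel
    rw [this, inner_add_left, real_inner_smul_left]
  have hself : ⟪u - v, u - v⟫ = ‖u - v‖ ^ 2 := real_inner_self_eq_norm_sq _
  have hfin := sub_nonneg.mpr hle
  rw [hexp, hself] at hfin
  linarith

end helpers

set_option maxHeartbeats 2000000 in
theorem moreau_aux {E : Type*} [NormedAddCommGroup E] [InnerProductSpace ℝ E] [CompleteSpace E]
    (ρ Lg γ : ℝ)
    (hρ : 0 < ρ) (hLg : 0 < Lg) (hγ : 0 < γ) (hγρ : γ * ρ < 1) (hγLg : γ * Lg ≤ 1 / 2)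
    (g : E → ℝ)
    (hweak : ConvexOn ℝ Set.univ (fun x => g x + ρ / 2 * ‖x‖ ^ 2))
    (g' : E → E) (g'' : E → (E →L[ℝ] E))
    (hg' : ∀ x, HasGradientAt g (g' x) x)
    (hg'' : ∀ x, HasFDerivAt g' (g'' x) x)
    (hg''cont : Continuous g'')
    (prox : E → E)
    (hprox : ∀ x y : E,
      1 / (2 * γ) * ‖x - prox x‖ ^ 2 + g (prox x) ≤ 1 / (2 * γ) * ‖x - y‖ ^ 2 + g y)
    (hbound : ∀ z ∈ Set.range prox, ‖g'' z‖ ≤ Lg) :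
    (∀ z : E,
      HasGradientAt (fun w : E => ⨅ y : E, 1 / (2 * γ) * ‖w - y‖ ^ 2 + g y)
        (γ⁻¹ • (z - prox z)) z) ∧
    (∀ x y : E, ‖γ⁻¹ • (x - prox x) - γ⁻¹ • (y - prox y)‖ ≤ 2 * Lg * ‖x - y‖) ∧
    ∀ x : E, ∃ H : E →L[ℝ] E,
        HasFDerivAt (fun z : E => γ⁻¹ • (z - prox z)) H x ∧
        ∀ v : E, -(2 * Lg) * ‖v‖ ^ 2 ≤ ⟪H v, v⟫ ∧ ⟪H v, v⟫ ≤ Lg * ‖v‖ ^ 2 := by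
  classical
  have hγne : γ ≠ 0 := hγ.ne'
  set G : E → E := fun z => γ⁻¹ • (z - prox z) with hGdef
  -- first-order condition
  have hfoc : ∀ z : E, prox z + γ • g' (prox z) = z :=
    fun z => aux_foc γ hγ g g' hg' z (prox z) (hprox z)
  set ψ : E → E := fun y => y + γ • g' y with hψdef
  have hψprox : ∀ z : E, ψ (prox z) = z := hfoc
  -- monotonicity of gradients
  have hmono : ∀ u v : E, -(ρ * ‖u - v‖ ^ 2) ≤ ⟪g' u - g' v, u - v⟫ :=
    fun u v => aux_mono ρ g g' hg' hweak u v
  -- injectivity of ψ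
  have hinj : ∀ a b : E, ψ a = ψ b → a = b := by
    intro a b hab
    by_contra hne
    have h1 : ψ a - ψ b = (a - b) + γ • (g' a - g' b) := by
      simp only [hψdef, smul_sub]; abel
    have h2 : (0 : ℝ) = ⟪ψ a - ψ b, a - b⟫ := by rw [hab, sub_self, inner_zero_left]
    rw [h1, inner_add_left, real_inner_smul_left, real_inner_self_eq_norm_sq] at h2
    have h3 := hmono a b
    have h4 : 0 < ‖a - b‖ ^ 2 := pow_pos (norm_pos_iff.mpr (sub_ne_zero.mpr hne)) 2
    nlinarith [mul_le_mul_of_nonneg_left h3 hγ.le]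
  have hlinv : ∀ y : E, prox (ψ y) = y := fun y => hinj _ _ (hψprox (ψ y))
  -- derivative of ψ
  have hψd : ∀ y : E, HasFDerivAt ψ (1 + γ • g'' y) y := by
    intro y
    have h1 := (hg'' y).fun_const_smul γ
    have h2 := (hasFDerivAt_id y).fun_add h1
    simpa [hψdef, ContinuousLinearMap.one_def] using h2
  -- key pointwise construction
  have key : ∀ x : E, ∃ B : E →L[ℝ] E, HasFDerivAt prox B x ∧ ‖B‖ ≤ 2 ∧
      ∀ v : E, B v + γ • (g'' (prox x)) (B v) = v := by
    intro x
    set p := prox x with hp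
    set A := g'' p with hA
    have hAn : ‖A‖ ≤ Lg := hbound p ⟨x, hp.symm⟩
    have hsm : ‖-(γ • A)‖ < 1 := by
      have h1 : ‖γ • A‖ = |γ| * ‖A‖ := norm_smul γ A
      rw [norm_neg, h1, abs_of_pos hγ]
      nlinarith
    set U : (E →L[ℝ] E)ˣ := Units.oneSub (-(γ • A)) hsm with hU
    set Ueq : E ≃L[ℝ] E := ContinuousLinearEquiv.unitsEquiv ℝ E U with hUeqdef
    have hUeq : (Ueq : E →L[ℝ] E) = 1 + γ • A := by
      refine ContinuousLinearMap.ext fun v => ?_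
      have h1 : (Ueq : E →L[ℝ] E) v = (U : E →L[ℝ] E) v :=
        ContinuousLinearEquiv.unitsEquiv_apply ℝ E U v
      rw [h1, hU, Units.val_oneSub, sub_neg_eq_add]
    have hψs : HasStrictFDerivAt ψ (Ueq : E →L[ℝ] E) p := by
      rw [hUeq]
      exact hasStrictFDerivAt_of_hasFDerivAt_of_continuousAt
        (Filter.Eventually.of_forall hψd)
        ((continuous_const.add (hg''cont.const_smul γ)).continuousAt)
    have hstrict : HasStrictFDerivAt prox ((Ueq.symm : E ≃L[ℝ] E) : E →L[ℝ] E) (ψ p) :=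
      hψs.to_local_left_inverse (Filter.Eventually.of_forall hlinv)
    rw [hψprox x] at hstrict
    set B : E →L[ℝ] E := (Ueq.symm : E →L[ℝ] E) with hB
    have hrel : ∀ v : E, B v + γ • A (B v) = v := by
      intro v
      have h1 : Ueq (Ueq.symm v) = v := Ueq.apply_symm_apply v
      have h2 : (Ueq : E →L[ℝ] E) (B v) = v := h1
      rw [hUeq] at h2
      simpa [ContinuousLinearMap.add_apply, ContinuousLinearMap.smul_apply] using h2
    have hBnorm : ‖B‖ ≤ 2 := by
      have hBeq : B = 1 - γ • (A.comp B) := by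
        refine ContinuousLinearMap.ext fun v => ?_
        simp only [ContinuousLinearMap.sub_apply, ContinuousLinearMap.one_apply,
          ContinuousLinearMap.smul_apply, ContinuousLinearMap.comp_apply]
        rw [eq_sub_iff_add_eq]
        exact hrel v
      have h1 : ‖B‖ ≤ ‖(1 : E →L[ℝ] E)‖ + ‖γ • A.comp B‖ := by
        calc ‖B‖ = ‖(1 : E →L[ℝ] E) - γ • A.comp B‖ := by rw [← hBeq]
          _ ≤ ‖(1 : E →L[ℝ] E)‖ + ‖γ • A.comp B‖ := norm_sub_le _ _
      have h2 : ‖(1 : E →L[ℝ] E)‖ ≤ 1 := ContinuousLinearMap.norm_id_le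
      have h3 : ‖γ • A.comp B‖ ≤ γ * (Lg * ‖B‖) := by
        have h0 : ‖γ • A.comp B‖ = |γ| * ‖A.comp B‖ := norm_smul γ (A.comp B)
        rw [h0, abs_of_pos hγ]
        have h4 : ‖A.comp B‖ ≤ Lg * ‖B‖ :=
          le_trans (ContinuousLinearMap.opNorm_comp_le A B)
            (mul_le_mul_of_nonneg_right hAn (norm_nonneg _))
        nlinarith
      have h5 : γ * (Lg * ‖B‖) ≤ (1 / 2) * ‖B‖ := by
        nlinarith [norm_nonneg B]
      linarith
    exact ⟨B, hstrict.hasFDerivAt, hBnorm, hrel⟩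
  -- part 3 with norm bound
  have part3 : ∀ x : E, ∃ H : E →L[ℝ] E, HasFDerivAt G H x ∧ ‖H‖ ≤ 2 * Lg ∧
      ∀ v : E, -(2 * Lg) * ‖v‖ ^ 2 ≤ ⟪H v, v⟫ ∧ ⟪H v, v⟫ ≤ Lg * ‖v‖ ^ 2 := by
    intro x
    obtain ⟨B, hBd, hBn, hrel⟩ := key x
    set A := g'' (prox x) with hA
    have hAn : ‖A‖ ≤ Lg := hbound _ ⟨x, rfl⟩
    have hHeq : γ⁻¹ • ((1 : E →L[ℝ] E) - B) = A.comp B := by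
      refine ContinuousLinearMap.ext fun v => ?_
      simp only [ContinuousLinearMap.smul_apply, ContinuousLinearMap.sub_apply,
        ContinuousLinearMap.one_apply, ContinuousLinearMap.comp_apply]
      have h2 : v - B v = γ • A (B v) := by
        rw [sub_eq_iff_eq_add']
        exact (hrel v).symm
      rw [h2, smul_smul, inv_mul_cancel₀ hγne, one_smul]
    have hGd : HasFDerivAt G (γ⁻¹ • ((1 : E →L[ℝ] E) - B)) x := by
      have h1 := ((hasFDerivAt_id x).fun_sub hBd).fun_const_smul γ⁻¹
      simpa [hGdef, ContinuousLinearMap.one_def] using h1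
    refine ⟨γ⁻¹ • ((1 : E →L[ℝ] E) - B), hGd, ?_, ?_⟩
    · rw [hHeq]
      calc ‖A.comp B‖ ≤ ‖A‖ * ‖B‖ := ContinuousLinearMap.opNorm_comp_le A B
        _ ≤ Lg * 2 := mul_le_mul hAn hBn (norm_nonneg _) hLg.le
        _ = 2 * Lg := by ring
    · intro v
      set w := B v with hw
      have hvw : v = w + γ • A w := (hrel v).symm
      have hHv : (γ⁻¹ • ((1 : E →L[ℝ] E) - B)) v = A w := by
        rw [hHeq]; rfl
      rw [hHv]
      have hinner : ⟪A w, v⟫ = ⟪A w, w⟫ + γ * ‖A w‖ ^ 2 := by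
        conv_lhs => rw [hvw]
        rw [inner_add_right, real_inner_smul_right, real_inner_self_eq_norm_sq]
      have hnv : ‖v‖ ^ 2 = ‖w‖ ^ 2 + 2 * (γ * ⟪w, A w⟫) + γ ^ 2 * ‖A w‖ ^ 2 := by
        have hns : ‖γ • A w‖ = |γ| * ‖A w‖ := norm_smul γ (A w)
        conv_lhs => rw [hvw]
        rw [norm_add_sq_real, real_inner_smul_right, hns, abs_of_pos hγ, mul_pow]
      have hcomm : ⟪w, A w⟫ = ⟪A w, w⟫ := real_inner_comm _ _
      have hAw : ‖A w‖ ≤ Lg * ‖w‖ :=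
        le_trans (A.le_opNorm w) (mul_le_mul_of_nonneg_right hAn (norm_nonneg _))
      have hcs : |⟪A w, w⟫| ≤ ‖A w‖ * ‖w‖ := abs_real_inner_le_norm _ _
      set s := ⟪A w, w⟫ with hs
      set t := ‖A w‖ with ht
      set W := ‖w‖ with hW
      have hW0 : (0:ℝ) ≤ W := norm_nonneg _
      have ht0 : (0:ℝ) ≤ t := norm_nonneg _
      constructor
      · -- lower bound
        rw [hinner, hnv, hcomm]
        rcases eq_or_lt_of_le hW0 with hWz | hWpos
        · have hwz : w = 0 := norm_eq_zero.mp hWz.symm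
          have hsz : s = 0 := by rw [hs, hwz]; simp
          have htz : t = 0 := by rw [ht, hwz]; simp
          rw [hsz, htz, ← hWz]
          norm_num
        · have htW : t * W ≤ Lg * W * W := mul_le_mul_of_nonneg_right hAw hW0
          have hsl : -(Lg * W ^ 2) ≤ s := by nlinarith [neg_abs_le s, hcs]
          have hWt : s ^ 2 ≤ W ^ 2 * t ^ 2 := by
            nlinarith [mul_le_mul hcs hcs (abs_nonneg s) (mul_nonneg ht0 hW0), sq_abs s]
          have hpos1 : (0:ℝ) ≤ γ * (1 + 2 * (γ * Lg)) := by nlinarith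
          have hf2 : 0 ≤ γ * (1 + 2 * (γ * Lg)) * (s - Lg * W ^ 2) + (1 + 4 * (γ * Lg)) * W ^ 2 := by
            have hm := mul_le_mul_of_nonneg_left hsl hpos1
            nlinarith [sq_nonneg W, mul_nonneg (mul_nonneg (mul_nonneg hγ.le hLg.le)
              (mul_nonneg hγ.le hLg.le)) (sq_nonneg W),
              mul_nonneg (mul_nonneg hγ.le hLg.le) (sq_nonneg W)]
          have he1 : 0 ≤ γ * (1 + 2 * (γ * Lg)) * (W ^ 2 * t ^ 2 - s ^ 2) :=
            mul_nonneg hpos1 (by linarith)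
          have he2 : 0 ≤ (s + Lg * W ^ 2) *
              (γ * (1 + 2 * (γ * Lg)) * (s - Lg * W ^ 2) + (1 + 4 * (γ * Lg)) * W ^ 2) :=
            mul_nonneg (by linarith) hf2
          have he3 : 0 ≤ Lg * (W ^ 2) ^ 2 * (1 - γ * Lg) * (1 - 2 * (γ * Lg)) := by
            have : (0:ℝ) ≤ 1 - γ * Lg := by linarith
            have h2' : (0:ℝ) ≤ 1 - 2 * (γ * Lg) := by linarith
            positivity
          have hid : W ^ 2 * ((1 + 4 * (γ * Lg)) * s + γ * (1 + 2 * (γ * Lg)) * t ^ 2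
                + 2 * Lg * W ^ 2)
              = γ * (1 + 2 * (γ * Lg)) * (W ^ 2 * t ^ 2 - s ^ 2)
                + (s + Lg * W ^ 2) * (γ * (1 + 2 * (γ * Lg)) * (s - Lg * W ^ 2)
                    + (1 + 4 * (γ * Lg)) * W ^ 2)
                + Lg * (W ^ 2) ^ 2 * (1 - γ * Lg) * (1 - 2 * (γ * Lg)) := by ring
          by_contra hcon
          push_neg at hcon
          have hG : (1 + 4 * (γ * Lg)) * s + γ * (1 + 2 * (γ * Lg)) * t ^ 2
              + 2 * Lg * W ^ 2 < 0 := by nlinarith [hcon]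
          have hPpos : (0:ℝ) < W ^ 2 := by positivity
          have hPG := mul_neg_of_pos_of_neg hPpos hG
          rw [hid] at hPG
          linarith
      · -- upper bound
        rw [hinner, hnv, hcomm]
        have htW : t * W ≤ Lg * W * W := mul_le_mul_of_nonneg_right hAw hW0
        have hsu : s ≤ Lg * W ^ 2 := by nlinarith [le_abs_self s, hcs]
        have htt : t ^ 2 ≤ Lg ^ 2 * W ^ 2 := by nlinarith [hAw, ht0, hW0, hLg.le]
        have he1 : 0 ≤ (Lg * W ^ 2 - s) * (1 - 2 * (γ * Lg)) :=
          mul_nonneg (by linarith) (by linarith)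
        have he2 : 0 ≤ γ * ((Lg ^ 2 * W ^ 2 - t ^ 2) * (1 - γ * Lg)) :=
          mul_nonneg hγ.le (mul_nonneg (by linarith) (by linarith))
        have he3 : 0 ≤ Lg * W ^ 2 * (γ * Lg) * (1 + γ * Lg) := by
          have : (0:ℝ) ≤ 1 + γ * Lg := by nlinarith
          positivity
        nlinarith [he1, he2, he3]
  choose Hm hHd hHn hHb using part3
  -- part 2 : Lipschitz
  have part2 : ∀ x y : E, ‖G x - G y‖ ≤ 2 * Lg * ‖x - y‖ := by
    intro x y
    have := Convex.norm_image_sub_le_of_norm_hasFDerivWithin_le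
      (f := G) (f' := Hm) (s := Set.univ)
      (fun z _ => (hHd z).hasFDerivWithinAt) (fun z _ => hHn z) convex_univ
      (Set.mem_univ y) (Set.mem_univ x)
    simpa using this
  refine ⟨?_, part2, fun x => ⟨Hm x, hHd x, hHb x⟩⟩
  -- part 1 : gradient of the Moreau envelope
  intro z
  have hbdd : ∀ w : E, BddBelow (Set.range fun y => 1 / (2 * γ) * ‖w - y‖ ^ 2 + g y) := by
    intro w
    refine ⟨1 / (2 * γ) * ‖w - prox w‖ ^ 2 + g (prox w), ?_⟩
    rintro r ⟨y, rfl⟩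
    exact hprox w y
  set e : E → ℝ := fun w => ⨅ y : E, 1 / (2 * γ) * ‖w - y‖ ^ 2 + g y with hedef
  have hle : ∀ w y : E, e w ≤ 1 / (2 * γ) * ‖w - y‖ ^ 2 + g y :=
    fun w y => ciInf_le (hbdd w) y
  have he : ∀ w : E, e w = 1 / (2 * γ) * ‖w - prox w‖ ^ 2 + g (prox w) :=
    fun w => le_antisymm (hle w (prox w)) (le_ciInf (hprox w))
  rw [hasGradientAt_iff_isLittleO]
  have h2γ : (0:ℝ) < 2 * γ := by linarith
  apply aux_littleO_of_sq_bound (2 * Lg + 1 / (2 * γ))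
  intro w
  rw [abs_le]
  have h10 : ⟪(γ⁻¹ • (z - prox z) : E), w - z⟫ = γ⁻¹ * ⟪z - prox z, w - z⟫ :=
    real_inner_smul_left _ _ _
  constructor
  · -- lower bound
    have h1 : e z ≤ 1 / (2 * γ) * ‖z - prox w‖ ^ 2 + g (prox w) := hle z (prox w)
    have h2 : ‖z - prox w‖ ^ 2 = ‖w - prox w‖ ^ 2 + 2 * ⟪w - prox w, z - w⟫ + ‖z - w‖ ^ 2 := by
      have hrw : z - prox w = (w - prox w) + (z - w) := by abel
      rw [hrw, norm_add_sq_real]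
    have h3 : e w - e z ≥ γ⁻¹ * ⟪w - prox w, w - z⟫ - 1 / (2 * γ) * ‖w - z‖ ^ 2 := by
      rw [he w]
      have h4 : ⟪w - prox w, z - w⟫ = -⟪w - prox w, w - z⟫ := by
        rw [← inner_neg_right]
        congr 1
        abel
      have h5 : ‖z - w‖ = ‖w - z‖ := norm_sub_rev _ _
      rw [h2, h4, h5] at h1
      have hinv : γ⁻¹ = 1 / (2 * γ) * 2 := by field_simp
      nlinarith [h1]
    have h6 : ⟪G w, w - z⟫ = γ⁻¹ * ⟪w - prox w, w - z⟫ :=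
      real_inner_smul_left _ _ _
    have h7 : ⟪G w - G z, w - z⟫ ≥ -(2 * Lg * ‖w - z‖ * ‖w - z‖) := by
      have h8 : |⟪G w - G z, w - z⟫| ≤ ‖G w - G z‖ * ‖w - z‖ := abs_real_inner_le_norm _ _
      have h9 := part2 w z
      nlinarith [neg_abs_le ⟪G w - G z, w - z⟫, norm_nonneg (w - z)]
    have h11 : ⟪G w - G z, w - z⟫ = ⟪G w, w - z⟫ - ⟪G z, w - z⟫ := inner_sub_left _ _ _
    have h12 : ⟪G z, w - z⟫ = γ⁻¹ * ⟪z - prox z, w - z⟫ := real_inner_smul_left _ _ _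
    rw [h10]
    nlinarith [h3, h7, sq_nonneg ‖w - z‖, norm_nonneg (w - z)]
  · -- upper bound
    have h1 : e w ≤ 1 / (2 * γ) * ‖w - prox z‖ ^ 2 + g (prox z) := hle w (prox z)
    have h2 : ‖w - prox z‖ ^ 2 = ‖z - prox z‖ ^ 2 + 2 * ⟪z - prox z, w - z⟫ + ‖w - z‖ ^ 2 := by
      have hrw : w - prox z = (z - prox z) + (w - z) := by abel
      rw [hrw, norm_add_sq_real]
    have hez := he z
    have hinv : γ⁻¹ = 1 / (2 * γ) * 2 := by field_simp
    have hinvI : γ⁻¹ * ⟪z - prox z, w - z⟫ = 1 / (2 * γ) * 2 * ⟪z - prox z, w - z⟫ := by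
      rw [hinv]
    have h1' : e w ≤ 1 / (2 * γ) * (‖z - prox z‖ ^ 2 + 2 * ⟪z - prox z, w - z⟫
        + ‖w - z‖ ^ 2) + g (prox z) := by
      rw [h2] at h1; exact h1
    have hsq : (0:ℝ) ≤ 2 * Lg * ‖w - z‖ ^ 2 := by positivity
    rw [h10]
    nlinarith [h1', hez, hinvI, hsq]

/-- Under the hypotheses of Statement 12 with `γ L_g ≤ 1/2`, the Moreau
envelope `g^γ` is `2L_g`-smooth: its gradient `G z = (1/γ)(z − Prox_{γg}(z))` is
`2L_g`-Lipschitz, and its Hessian `H` (the derivative of `G`) satisfies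
`−2L_g‖v‖² ≤ ⟨H v, v⟩ ≤ L_g‖v‖²` at every point. -/
theorem moreau_envelope_smooth (d : ℕ) (hd : 1 ≤ d) (ρ Lg γ : ℝ)
    (hρ : 0 < ρ) (hLg : 0 < Lg) (hγ : 0 < γ) (hγρ : γ * ρ < 1) (hγLg : γ * Lg ≤ 1 / 2)
    (g : EuclideanSpace ℝ (Fin d) → ℝ)
    (hweak : ConvexOn ℝ Set.univ (fun x => g x + ρ / 2 * ‖x‖ ^ 2))
    (g' : EuclideanSpace ℝ (Fin d) → EuclideanSpace ℝ (Fin d))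
    (g'' : EuclideanSpace ℝ (Fin d) →
      (EuclideanSpace ℝ (Fin d) →L[ℝ] EuclideanSpace ℝ (Fin d)))
    (hg' : ∀ x, HasGradientAt g (g' x) x)
    (hg'' : ∀ x, HasFDerivAt g' (g'' x) x)
    (hg''cont : Continuous g'')
    (prox : EuclideanSpace ℝ (Fin d) → EuclideanSpace ℝ (Fin d))
    (hprox : ∀ x y : EuclideanSpace ℝ (Fin d),
      1 / (2 * γ) * ‖x - prox x‖ ^ 2 + g (prox x)
        ≤ 1 / (2 * γ) * ‖x - y‖ ^ 2 + g y)
    (hbound : ∀ z ∈ Set.range prox, ‖g'' z‖ ≤ Lg) :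
    (∀ z : EuclideanSpace ℝ (Fin d),
      HasGradientAt
        (fun w : EuclideanSpace ℝ (Fin d) =>
          ⨅ y : EuclideanSpace ℝ (Fin d), 1 / (2 * γ) * ‖w - y‖ ^ 2 + g y)
        (γ⁻¹ • (z - prox z)) z) ∧
    (∀ x y : EuclideanSpace ℝ (Fin d),
      ‖γ⁻¹ • (x - prox x) - γ⁻¹ • (y - prox y)‖ ≤ 2 * Lg * ‖x - y‖) ∧
    ∀ x : EuclideanSpace ℝ (Fin d),
      ∃ H : EuclideanSpace ℝ (Fin d) →L[ℝ] EuclideanSpace ℝ (Fin d),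
        HasFDerivAt (fun z : EuclideanSpace ℝ (Fin d) => γ⁻¹ • (z - prox z)) H x ∧
        ∀ v : EuclideanSpace ℝ (Fin d),
          -(2 * Lg) * ‖v‖ ^ 2 ≤ ⟪H v, v⟫ ∧ ⟪H v, v⟫ ≤ Lg * ‖v‖ ^ 2 := by
  exact moreau_aux ρ Lg γ hρ hLg hγ hγρ hγLg g hweak g' g'' hg' hg'' hg''cont prox hprox hbound
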